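/- Let X be a real Banach space that is midpoint locally uniformly rotund (MLUR) and let M be a complete subset of X, regarded as a metric space with the metric induced by the norm. Let x ≠ y ∈ M. The following are equivalent: (1) the pair (x, y) satisfies the local Δ-condition; (2) for every r with 0 < r < ‖x − y‖ and every ε > 0 there exists z ∈ M with ‖z − x‖ ≤ r + ε and ‖z − y‖ ≤ ‖x − y‖ − r + ε; (3) the segment [x, y] = {(1 − t)·x + t·y : t ∈ [0, 1]} is contained in M. -/
import Mathlib


open Filter

/-- The pair of distinct points of a metric space satisfies the local Δ-condition. -/
def LocalDeltaCondition {M : Type*} [MetricSpace M] (x y : M) : Prop :=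
  ∀ f : M → ℝ, LipschitzWith 1 f → ∀ θ : ℝ, 0 < θ → θ < 1 →
    f x - f y > θ * dist x y → ∀ ε : ℝ, 0 < ε →
      ∃ u v : M, 0 < dist u v ∧ dist u v < ε ∧ f u - f v > θ * dist u v

/-- `X` is midpoint locally uniformly rotund (MLUR). -/
def MLUR (X : Type*) [NormedAddCommGroup X] [NormedSpace ℝ X] : Prop :=
  ∀ (x y : ℕ → X) (z : X),
    Tendsto (fun n => ‖x n‖) atTop (nhds 1) →
    Tendsto (fun n => ‖y n‖) atTop (nhds 1) →
    Tendsto (fun n => (1 / 2 : ℝ) • (x n + y n)) atTop (nhds z) → ‖z‖ = 1 →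
    Tendsto (fun n => ‖x n - y n‖) atTop (nhds 0)


section AuxChain

variable {X : Type*} [NormedAddCommGroup X]

/-- Set of lengths of chains in `M` from `y₀` to `z` with steps of size at most `ε₀`. -/
def chainSums (M : Set X) (y₀ : X) (ε₀ : ℝ) (z : X) : Set ℝ :=
  {s | ∃ (n : ℕ) (p : ℕ → X), p 0 = y₀ ∧ p n = z ∧ (∀ i, i ≤ n → p i ∈ M) ∧
      (∀ i, i < n → ‖p (i + 1) - p i‖ ≤ ε₀) ∧
      s = ∑ i ∈ Finset.range n, ‖p (i + 1) - p i‖}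

lemma chainSums_nonneg {M : Set X} {y₀ : X} {ε₀ : ℝ} {z : X} {s : ℝ}
    (hs : s ∈ chainSums M y₀ ε₀ z) : 0 ≤ s := by
  obtain ⟨n, p, -, -, -, -, rfl⟩ := hs
  exact Finset.sum_nonneg fun i _ => norm_nonneg _

lemma chainSums_zero_mem {M : Set X} {y₀ : X} {ε₀ : ℝ} (hy : y₀ ∈ M) :
    (0:ℝ) ∈ chainSums M y₀ ε₀ y₀ :=
  ⟨0, fun _ => y₀, rfl, rfl, fun _ _ => hy, fun i hi => absurd hi (Nat.not_lt_zero i), by simp⟩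

lemma chainSums_extend {M : Set X} {y₀ : X} {ε₀ : ℝ} {z z' : X} {s : ℝ}
    (hz' : z' ∈ M) (hd : ‖z' - z‖ ≤ ε₀) (hs : s ∈ chainSums M y₀ ε₀ z) :
    s + ‖z' - z‖ ∈ chainSums M y₀ ε₀ z' := by
  classical
  obtain ⟨n, p, h0, hn, hmem, hstep, rfl⟩ := hs
  refine ⟨n + 1, fun i => if i ≤ n then p i else z', by simp [Nat.zero_le, h0],
    by simp, ?_, ?_, ?_⟩
  · intro i _
    by_cases h : i ≤ n
    · simpa [h] using hmem i h
    · simp [h, hz']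
  · intro i hi
    rcases Nat.lt_succ_iff_lt_or_eq.1 hi with h | rfl
    · have h1 : i + 1 ≤ n := h
      have h2 : i ≤ n := h.le
      simpa [h1, h2] using hstep i h
    · have h1 : ¬ (i + 1 ≤ i) := by omega
      simpa [h1, hn] using hd
  · rw [Finset.sum_range_succ]
    have h1 : ¬ (n + 1 ≤ n) := by omega
    congr 1
    · refine Finset.sum_congr rfl fun i hi => ?_
      have hi' := Finset.mem_range.1 hi
      have h2 : i + 1 ≤ n := hi'
      have h3 : i ≤ n := hi'.le
      simp [h2, h3]
    · simp [h1, hn]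

lemma chainSums_lower {M : Set X} {x y : X} {r ε' ε₀ : ℝ}
    (hr0 : 0 < r) (hrd : r < ‖x - y‖) (hε₀' : ε₀ ≤ ε')
    (hlens : ∀ z ∈ M, ‖z - x‖ ≤ r + ε' → ‖x - y‖ - r + ε' < ‖z - y‖) :
    ∀ s ∈ chainSums M y ε₀ x, ‖x - y‖ + ε' ≤ s := by
  classical
  rintro s ⟨N, p, h0, hN, hmem, hstep, rfl⟩
  set I := (Finset.range (N + 1)).filter (fun i => r ≤ ‖p i - x‖) with hI
  have h0I : 0 ∈ I := by
    simp only [hI, Finset.mem_filter, Finset.mem_range, h0]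
    exact ⟨by omega, by rw [norm_sub_rev]; exact hrd.le⟩
  have hIne : I.Nonempty := ⟨0, h0I⟩
  set i₀ := I.max' hIne with hi₀
  have hi₀I : i₀ ∈ I := I.max'_mem hIne
  have hi₀N : i₀ ≤ N := by
    have := (Finset.mem_filter.1 hi₀I).1
    rw [Finset.mem_range] at this; omega
  have hi₀r : r ≤ ‖p i₀ - x‖ := (Finset.mem_filter.1 hi₀I).2
  have hNnotin : ¬ r ≤ ‖p N - x‖ := by rw [hN]; simp; linarith
  have hi₀ltN : i₀ < N := by
    rcases lt_or_eq_of_le hi₀N with h | h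
    · exact h
    · exact absurd (h ▸ hi₀r) hNnotin
  have hsucc : ‖p (i₀ + 1) - x‖ < r := by
    by_contra h
    push_neg at h
    have hmemI : i₀ + 1 ∈ I := by
      simp only [hI, Finset.mem_filter, Finset.mem_range]
      exact ⟨by omega, h⟩
    have := I.le_max' _ hmemI
    omega
  have hcross : ‖p i₀ - x‖ ≤ r + ε₀ := by
    have h1 := hstep i₀ hi₀ltN
    have h2 : ‖p i₀ - x‖ ≤ ‖p (i₀ + 1) - p i₀‖ + ‖p (i₀ + 1) - x‖ := by
      have he : p i₀ - x = -(p (i₀ + 1) - p i₀) + (p (i₀ + 1) - x) := by abel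
      rw [he]
      exact (norm_add_le _ _).trans (by rw [norm_neg])
    linarith
  have hmy : ‖x - y‖ - r + ε' < ‖p i₀ - y‖ :=
    hlens _ (hmem i₀ hi₀ltN.le) (by linarith)
  have hsplit : ∑ i ∈ Finset.range N, ‖p (i + 1) - p i‖ =
      (∑ i ∈ Finset.Ico 0 i₀, ‖p (i + 1) - p i‖) +
      ∑ i ∈ Finset.Ico i₀ N, ‖p (i + 1) - p i‖ := by
    rw [Finset.range_eq_Ico,
      Finset.sum_Ico_consecutive _ (Nat.zero_le i₀) hi₀ltN.le]
  have hpre : ‖p i₀ - y‖ ≤ ∑ i ∈ Finset.Ico 0 i₀, ‖p (i + 1) - p i‖ := by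
    have h1 := dist_le_range_sum_dist p i₀
    rw [Finset.range_eq_Ico] at h1
    have h2 : ∑ i ∈ Finset.Ico 0 i₀, dist (p i) (p (i + 1)) =
        ∑ i ∈ Finset.Ico 0 i₀, ‖p (i + 1) - p i‖ :=
      Finset.sum_congr rfl fun i _ => by rw [dist_eq_norm, norm_sub_rev]
    rw [h2] at h1
    calc ‖p i₀ - y‖ = dist (p 0) (p i₀) := by rw [h0, dist_eq_norm, norm_sub_rev]
      _ ≤ _ := h1
  have hsuf : r ≤ ∑ i ∈ Finset.Ico i₀ N, ‖p (i + 1) - p i‖ := by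
    have h1 := dist_le_Ico_sum_dist p hi₀ltN.le
    have h2 : ∑ i ∈ Finset.Ico i₀ N, dist (p i) (p (i + 1)) =
        ∑ i ∈ Finset.Ico i₀ N, ‖p (i + 1) - p i‖ :=
      Finset.sum_congr rfl fun i _ => by rw [dist_eq_norm, norm_sub_rev]
    rw [h2] at h1
    calc r ≤ ‖p i₀ - x‖ := hi₀r
      _ = dist (p i₀) (p N) := by rw [hN, dist_eq_norm]
      _ ≤ _ := h1
  rw [hsplit]
  linarith

end AuxChain

section AuxLens

variable {X : Type*} [NormedAddCommGroup X] [NormedSpace ℝ X]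

lemma mlur_lens (hmlur : MLUR X) {x y : X} {r : ℝ} (hr0 : 0 < r) (hrd : r < ‖x - y‖)
    {δ : ℝ} (hδ : 0 < δ) :
    ∃ ε > 0, ∀ z : X, ‖z - x‖ ≤ r + ε → ‖z - y‖ ≤ ‖x - y‖ - r + ε →
      ‖z - ((1 - r / ‖x - y‖) • x + (r / ‖x - y‖) • y)‖ ≤ δ := by
  have hd0 : 0 < ‖x - y‖ := lt_trans hr0 hrd
  set d : ℝ := ‖x - y‖ with hdd
  set t : ℝ := r / d with htt
  have ht0 : 0 < t := div_pos hr0 hd0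
  have ht1 : t < 1 := (div_lt_one hd0).2 hrd
  have hdr0 : 0 < d - r := sub_pos.2 hrd
  by_contra hcon
  push_neg at hcon
  choose Z h1 h2 h3 using fun n : ℕ => hcon (1 / ((n : ℝ) + 1)) (by positivity)
  have hinv : Tendsto (fun n : ℕ => 1 / ((n : ℝ) + 1)) atTop (nhds 0) :=
    tendsto_one_div_add_atTop_nhds_zero_nat
  -- distances to x and y converge
  have htri : ∀ n, d ≤ ‖Z n - x‖ + ‖Z n - y‖ := by
    intro n
    have := dist_triangle x (Z n) y
    rw [dist_eq_norm, dist_eq_norm, dist_eq_norm, norm_sub_rev x (Z n)] at this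
    exact this
  have hZx : Tendsto (fun n => ‖Z n - x‖) atTop (nhds r) := by
    have hlow : ∀ n : ℕ, r - 1 / ((n : ℝ) + 1) ≤ ‖Z n - x‖ := by
      intro n; have := htri n; have := h2 n; linarith
    have hlowT : Tendsto (fun n : ℕ => r - 1 / ((n : ℝ) + 1)) atTop (nhds r) := by
      simpa using tendsto_const_nhds.sub hinv
    have hhighT : Tendsto (fun n : ℕ => r + 1 / ((n : ℝ) + 1)) atTop (nhds r) := by
      simpa using tendsto_const_nhds.add hinv
    exact tendsto_of_tendsto_of_tendsto_of_le_of_le hlowT hhighT hlow h1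
  have hZy : Tendsto (fun n => ‖Z n - y‖) atTop (nhds (d - r)) := by
    have hlow : ∀ n : ℕ, d - r - 1 / ((n : ℝ) + 1) ≤ ‖Z n - y‖ := by
      intro n; have := htri n; have := h1 n; linarith
    have hlowT : Tendsto (fun n : ℕ => d - r - 1 / ((n : ℝ) + 1)) atTop (nhds (d - r)) := by
      simpa using tendsto_const_nhds.sub hinv
    have hhighT : Tendsto (fun n : ℕ => d - r + 1 / ((n : ℝ) + 1)) atTop (nhds (d - r)) := by
      simpa using tendsto_const_nhds.add hinv
    exact tendsto_of_tendsto_of_tendsto_of_le_of_le hlowT hhighT hlow h2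
  -- normalized vectors (opaque)
  obtain ⟨w, hw⟩ : ∃ w : X, w = d⁻¹ • (y - x) := ⟨_, rfl⟩
  obtain ⟨p, hp⟩ : ∃ p : ℕ → X, ∀ n, p n = r⁻¹ • (Z n - x) := ⟨_, fun _ => rfl⟩
  obtain ⟨q, hq⟩ : ∃ q : ℕ → X, ∀ n, q n = (d - r)⁻¹ • (y - Z n) := ⟨_, fun _ => rfl⟩
  have hnw : ‖w‖ = 1 := by
    rw [hw, norm_smul, Real.norm_eq_abs, abs_of_pos (inv_pos.2 hd0), norm_sub_rev]
    exact inv_mul_cancel₀ hd0.ne'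
  have hnp : ∀ n, ‖p n‖ = r⁻¹ * ‖Z n - x‖ := fun n => by
    rw [hp n, norm_smul, Real.norm_eq_abs, abs_of_pos (inv_pos.2 hr0)]
  have hnq : ∀ n, ‖q n‖ = (d - r)⁻¹ * ‖Z n - y‖ := fun n => by
    rw [hq n, norm_smul, Real.norm_eq_abs, abs_of_pos (inv_pos.2 hdr0), norm_sub_rev]
  have hp1 : Tendsto (fun n => ‖p n‖) atTop (nhds 1) := by
    have h := hZx.const_mul r⁻¹
    rw [inv_mul_cancel₀ hr0.ne'] at h
    exact h.congr fun n => (hnp n).symm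
  have hq1 : Tendsto (fun n => ‖q n‖) atTop (nhds 1) := by
    have h := hZy.const_mul (d - r)⁻¹
    rw [inv_mul_cancel₀ hdr0.ne'] at h
    exact h.congr fun n => (hnq n).symm
  obtain ⟨s, hsdef⟩ : ∃ s : ℝ, s = min t (1 - t) := ⟨_, rfl⟩
  have hs0 : 0 < s := hsdef ▸ lt_min ht0 (by linarith)
  have hst : s ≤ t := hsdef ▸ min_le_left _ _
  have hs1t : s ≤ 1 - t := hsdef ▸ min_le_right _ _
  have hcomb : ∀ n, t • p n + (1 - t) • q n = w := by
    intro n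
    have e1 : t • p n = d⁻¹ • (Z n - x) := by
      rw [hp n, smul_smul]
      congr 1
      rw [htt, div_eq_mul_inv, mul_comm r d⁻¹, mul_assoc, mul_inv_cancel₀ hr0.ne', mul_one]
    have h1t : 1 - t = (d - r) * d⁻¹ := by
      rw [htt]
      field_simp
    have e2 : (1 - t) • q n = d⁻¹ • (y - Z n) := by
      rw [hq n, smul_smul]
      congr 1
      rw [h1t, mul_comm (d - r) d⁻¹, mul_assoc, mul_inv_cancel₀ hdr0.ne', mul_one]
    rw [e1, e2, ← smul_add, hw]
    congr 1
    abel
  obtain ⟨xs, hxs⟩ : ∃ xs : ℕ → X, ∀ n, xs n = w + s • (p n - q n) := ⟨_, fun _ => rfl⟩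
  obtain ⟨ys, hys⟩ : ∃ ys : ℕ → X, ∀ n, ys n = w - s • (p n - q n) := ⟨_, fun _ => rfl⟩
  have hxs_eq : ∀ n, xs n = (t + s) • p n + (1 - t - s) • q n := by
    intro n; rw [hxs n, ← hcomb n]; module
  have hys_eq : ∀ n, ys n = (t - s) • p n + (1 - t + s) • q n := by
    intro n; rw [hys n, ← hcomb n]; module
  have hxs_le : ∀ n, ‖xs n‖ ≤ (t + s) * ‖p n‖ + (1 - t - s) * ‖q n‖ := by
    intro n
    rw [hxs_eq n]
    refine (norm_add_le _ _).trans ?_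
    rw [norm_smul_of_nonneg (by linarith), norm_smul_of_nonneg (by linarith)]
  have hys_le : ∀ n, ‖ys n‖ ≤ (t - s) * ‖p n‖ + (1 - t + s) * ‖q n‖ := by
    intro n
    rw [hys_eq n]
    refine (norm_add_le _ _).trans ?_
    rw [norm_smul_of_nonneg (by linarith), norm_smul_of_nonneg (by linarith)]
  have hA : Tendsto (fun n => (t + s) * ‖p n‖ + (1 - t - s) * ‖q n‖) atTop (nhds 1) := by
    have h := (hp1.const_mul (t + s)).add (hq1.const_mul (1 - t - s))
    rw [show (t + s) * 1 + (1 - t - s) * 1 = (1:ℝ) by ring] at h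
    exact h
  have hB : Tendsto (fun n => (t - s) * ‖p n‖ + (1 - t + s) * ‖q n‖) atTop (nhds 1) := by
    have h := (hp1.const_mul (t - s)).add (hq1.const_mul (1 - t + s))
    rw [show (t - s) * 1 + (1 - t + s) * 1 = (1:ℝ) by ring] at h
    exact h
  have hsum2 : ∀ n, (2:ℝ) ≤ ‖xs n‖ + ‖ys n‖ := by
    intro n
    have he : xs n + ys n = (2:ℝ) • w := by rw [hxs n, hys n]; module
    have h1' : ‖xs n + ys n‖ ≤ ‖xs n‖ + ‖ys n‖ := norm_add_le _ _
    rw [he, norm_smul, Real.norm_eq_abs, hnw] at h1'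
    simpa using h1'
  have hxs1 : Tendsto (fun n => ‖xs n‖) atTop (nhds 1) := by
    have hlowT : Tendsto (fun n => 2 - ((t - s) * ‖p n‖ + (1 - t + s) * ‖q n‖))
        atTop (nhds 1) := by
      have h : Tendsto (fun n => (2:ℝ) - ((t - s) * ‖p n‖ + (1 - t + s) * ‖q n‖))
          atTop (nhds (2 - 1)) :=
        (tendsto_const_nhds : Tendsto (fun _ : ℕ => (2:ℝ)) atTop (nhds 2)).sub hB
      norm_num at h
      exact h
    refine tendsto_of_tendsto_of_tendsto_of_le_of_le hlowT hA (fun n => ?_) hxs_le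
    show 2 - ((t - s) * ‖p n‖ + (1 - t + s) * ‖q n‖) ≤ ‖xs n‖
    have h1' := hsum2 n
    have h2' := hys_le n
    linarith
  have hys1 : Tendsto (fun n => ‖ys n‖) atTop (nhds 1) := by
    have hlowT : Tendsto (fun n => 2 - ((t + s) * ‖p n‖ + (1 - t - s) * ‖q n‖))
        atTop (nhds 1) := by
      have h : Tendsto (fun n => (2:ℝ) - ((t + s) * ‖p n‖ + (1 - t - s) * ‖q n‖))
          atTop (nhds (2 - 1)) :=
        (tendsto_const_nhds : Tendsto (fun _ : ℕ => (2:ℝ)) atTop (nhds 2)).sub hA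
      norm_num at h
      exact h
    refine tendsto_of_tendsto_of_tendsto_of_le_of_le hlowT hB (fun n => ?_) hys_le
    show 2 - ((t + s) * ‖p n‖ + (1 - t - s) * ‖q n‖) ≤ ‖ys n‖
    have h1' := hsum2 n
    have h2' := hxs_le n
    linarith
  have hmid : Tendsto (fun n => (1 / 2 : ℝ) • (xs n + ys n)) atTop (nhds w) := by
    have he : ∀ n, (1 / 2 : ℝ) • (xs n + ys n) = w := by
      intro n; rw [hxs n, hys n]; module
    exact tendsto_const_nhds.congr fun n => (he n).symm
  have hkey := hmlur xs ys w hxs1 hys1 hmid hnw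
  have h2s : (0:ℝ) < 2 * s := by linarith
  have hpq0 : Tendsto (fun n => ‖p n - q n‖) atTop (nhds 0) := by
    have h' : Tendsto (fun n => (2 * s) * ‖p n - q n‖) atTop (nhds 0) := by
      refine hkey.congr fun n => ?_
      have he : xs n - ys n = (2 * s) • (p n - q n) := by rw [hxs n, hys n]; module
      rw [he, norm_smul, Real.norm_eq_abs, abs_of_pos h2s]
    have h'' := h'.const_mul (2 * s)⁻¹
    rw [mul_zero] at h''
    refine h''.congr fun n => ?_
    rw [← mul_assoc, inv_mul_cancel₀ h2s.ne', one_mul]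
  have hZt : Tendsto (fun n => ‖Z n - ((1 - t) • x + t • y)‖) atTop (nhds 0) := by
    have he : ∀ n, Z n - ((1 - t) • x + t • y) = (r * (1 - t)) • (p n - q n) := by
      intro n
      have hpw : p n - w = (1 - t) • (p n - q n) := by rw [← hcomb n]; module
      have hrp : r • p n = Z n - x := by rw [hp n, smul_inv_smul₀ hr0.ne']
      have hrw : r • w = t • (y - x) := by
        rw [hw, smul_smul, htt, div_eq_mul_inv]
      have hztx : ((1 - t) • x + t • y) - x = t • (y - x) := by module
      calc Z n - ((1 - t) • x + t • y)
          = (Z n - x) - (((1 - t) • x + t • y) - x) := by abel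
        _ = r • p n - r • w := by rw [hrp, hrw, hztx]
        _ = r • (p n - w) := by rw [smul_sub]
        _ = r • ((1 - t) • (p n - q n)) := by rw [hpw]
        _ = (r * (1 - t)) • (p n - q n) := by rw [smul_smul]
    have hc : (0:ℝ) < r * (1 - t) := by nlinarith
    have h'' := hpq0.const_mul (r * (1 - t))
    rw [mul_zero] at h''
    refine (h''.congr fun n => ?_)
    rw [he n, norm_smul, Real.norm_eq_abs, abs_of_pos hc]
  have hge : δ ≤ 0 := ge_of_tendsto' hZt fun n => (h3 n).le
  linarith

end AuxLens

section AuxSeg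

variable {X : Type*} [NormedAddCommGroup X] [NormedSpace ℝ X]

lemma seg_dist_x {x y : X} (hd0 : 0 < ‖x - y‖) {r : ℝ} (hr0 : 0 ≤ r) :
    ‖((1 - r / ‖x - y‖) • x + (r / ‖x - y‖) • y) - x‖ = r := by
  have he : ((1 - r / ‖x - y‖) • x + (r / ‖x - y‖) • y) - x = (r / ‖x - y‖) • (y - x) := by
    module
  rw [he, norm_smul_of_nonneg (by positivity), norm_sub_rev y x]
  exact div_mul_cancel₀ _ hd0.ne'

lemma seg_dist_y {x y : X} (hd0 : 0 < ‖x - y‖) {r : ℝ} (hrd : r ≤ ‖x - y‖) :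
    ‖((1 - r / ‖x - y‖) • x + (r / ‖x - y‖) • y) - y‖ = ‖x - y‖ - r := by
  have he : ((1 - r / ‖x - y‖) • x + (r / ‖x - y‖) • y) - y
      = (1 - r / ‖x - y‖) • (x - y) := by module
  rw [he, norm_smul_of_nonneg (by rw [sub_nonneg, div_le_one hd0]; exact hrd),
    sub_mul, one_mul, div_mul_cancel₀ _ hd0.ne']

lemma segment_to_delta {M : Set X} {x y : X} (hx : x ∈ M) (hy : y ∈ M) (hxy : x ≠ y)
    (hseg : ∀ t : ℝ, 0 ≤ t → t ≤ 1 → (1 - t) • x + t • y ∈ M) :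
    LocalDeltaCondition (⟨x, hx⟩ : M) (⟨y, hy⟩ : M) := by
  intro f hf θ hθ0 hθ1 hgt ε hε
  have hd0 : 0 < dist x y := dist_pos.2 hxy
  obtain ⟨n, hn⟩ := exists_nat_gt (dist x y / ε)
  have hn0 : 0 < n := by
    have hq : 0 < dist x y / ε := div_pos hd0 hε
    rcases Nat.eq_zero_or_pos n with rfl | h
    · norm_num at hn; linarith
    · exact h
  have hnR : 0 < (n : ℝ) := Nat.cast_pos.2 hn0
  have hdn : dist x y / n < ε := by
    rw [div_lt_iff₀ hnR]
    have h' := (div_lt_iff₀ hε).1 hn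
    linarith
  have hmem : ∀ i : ℕ,
      (1 - ((min i n : ℕ) : ℝ) / n) • x + (((min i n : ℕ) : ℝ) / n) • y ∈ M := fun i =>
    hseg _ (by positivity) (by rw [div_le_one hnR]; exact_mod_cast min_le_right i n)
  set g : ℕ → ↥M := fun i => ⟨_, hmem i⟩ with hgdef
  have hg0 : g 0 = (⟨x, hx⟩ : M) := by
    apply Subtype.ext
    show (1 - ((min 0 n : ℕ) : ℝ) / n) • x + (((min 0 n : ℕ) : ℝ) / n) • y = x
    simp
  have hgn : g n = (⟨y, hy⟩ : M) := by
    apply Subtype.ext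
    show (1 - ((min n n : ℕ) : ℝ) / n) • x + (((min n n : ℕ) : ℝ) / n) • y = y
    rw [min_self, div_self hnR.ne']
    simp
  have htel : ∑ i ∈ Finset.range n, (f (g i) - f (g (i + 1))) = f (g 0) - f (g n) :=
    Finset.sum_range_sub' (fun i => f (g i)) n
  have hsum : ∑ i ∈ Finset.range n, (θ * (dist x y / n))
      < ∑ i ∈ Finset.range n, (f (g i) - f (g (i + 1))) := by
    rw [htel, hg0, hgn, Finset.sum_const, Finset.card_range, nsmul_eq_mul]
    have he : (n : ℝ) * (θ * (dist x y / n)) = θ * dist x y := by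
      field_simp
    rw [he]
    simpa [Subtype.dist_eq] using hgt
  obtain ⟨i, hiR, hlt⟩ := Finset.exists_lt_of_sum_lt hsum
  have hin : i < n := Finset.mem_range.1 hiR
  have himin : min i n = i := min_eq_left hin.le
  have himin1 : min (i + 1) n = i + 1 := min_eq_left hin
  have hdist : dist (g i) (g (i + 1)) = dist x y / n := by
    rw [Subtype.dist_eq]
    show dist ((1 - ((min i n : ℕ) : ℝ) / n) • x + (((min i n : ℕ) : ℝ) / n) • y)
      ((1 - ((min (i+1) n : ℕ) : ℝ) / n) • x + (((min (i+1) n : ℕ) : ℝ) / n) • y)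
      = dist x y / n
    rw [himin, himin1, dist_eq_norm]
    have he : ((1 - (i : ℝ) / n) • x + ((i : ℝ) / n) • y)
        - ((1 - ((i + 1 : ℕ) : ℝ) / n) • x + (((i + 1 : ℕ) : ℝ) / n) • y)
        = (((i + 1 : ℕ) : ℝ) / n - (i : ℝ) / n) • (x - y) := by
      module
    rw [he]
    have hcoef : ((i + 1 : ℕ) : ℝ) / n - (i : ℝ) / n = 1 / n := by
      rw [div_sub_div_same]
      congr 1
      push_cast
      ring
    rw [hcoef, norm_smul_of_nonneg (by positivity), dist_eq_norm]
    ring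
  refine ⟨g i, g (i + 1), ?_, ?_, ?_⟩
  · rw [hdist]; positivity
  · rw [hdist]; exact hdn
  · rw [hdist]; exact hlt

end AuxSeg


section AuxFinal

variable {X : Type*} [NormedAddCommGroup X] [NormedSpace ℝ X]

lemma cond2_to_segment (hmlur : MLUR X) {M : Set X} (hM : IsComplete M)
    {x y : X} (hx : x ∈ M) (hy : y ∈ M) (hxy : x ≠ y)
    (h2 : ∀ r : ℝ, 0 < r → r < ‖x - y‖ → ∀ ε : ℝ, 0 < ε →
      ∃ z ∈ M, ‖z - x‖ ≤ r + ε ∧ ‖z - y‖ ≤ ‖x - y‖ - r + ε)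
    {t : ℝ} (ht0 : 0 ≤ t) (ht1 : t ≤ 1) : (1 - t) • x + t • y ∈ M := by
  have hd0 : 0 < ‖x - y‖ := by rw [norm_sub_pos_iff]; exact hxy
  rcases ht0.eq_or_lt with rfl | ht0'
  · simpa using hx
  rcases ht1.eq_or_lt with rfl | ht1'
  · simpa using hy
  have hr0 : 0 < t * ‖x - y‖ := mul_pos ht0' hd0
  have hrd : t * ‖x - y‖ < ‖x - y‖ := by nlinarith
  have hrt : t * ‖x - y‖ / ‖x - y‖ = t := by
    rw [mul_div_assoc, div_self hd0.ne', mul_one]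
  have hcl : (1 - t) • x + t • y ∈ closure M := by
    rw [Metric.mem_closure_iff]
    intro ρ hρ
    obtain ⟨ε', hε'0, hball⟩ := mlur_lens hmlur hr0 hrd (half_pos hρ)
    obtain ⟨z, hzM, hz1, hz2⟩ := h2 (t * ‖x - y‖) hr0 hrd ε' hε'0
    refine ⟨z, hzM, ?_⟩
    have hb := hball z hz1 hz2
    rw [hrt] at hb
    rw [dist_eq_norm, norm_sub_rev]
    exact lt_of_le_of_lt hb (half_lt_self hρ)
  rwa [hM.isClosed.closure_eq] at hcl

lemma gap_to_not_delta (hmlur : MLUR X) {M : Set X} (hMc : IsClosed M)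
    {x y : X} (hx : x ∈ M) (hy : y ∈ M)
    {r ε₃ : ℝ} (hr0 : 0 < r) (hrd : r < ‖x - y‖) (hε₃ : 0 < ε₃)
    (hgap : ∀ z ∈ M, ‖z - x‖ ≤ r + ε₃ → ‖x - y‖ - r + ε₃ < ‖z - y‖) :
    ¬ LocalDeltaCondition (⟨x, hx⟩ : M) (⟨y, hy⟩ : M) := by
  intro hΔ
  have hd0 : 0 < ‖x - y‖ := lt_trans hr0 hrd
  have hztx : ‖((1 - r / ‖x - y‖) • x + (r / ‖x - y‖) • y) - x‖ = r := seg_dist_x hd0 hr0.le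
  have hzty : ‖((1 - r / ‖x - y‖) • x + (r / ‖x - y‖) • y) - y‖ = ‖x - y‖ - r :=
    seg_dist_y hd0 hrd.le
  have hztM : ((1 - r / ‖x - y‖) • x + (r / ‖x - y‖) • y) ∉ M := by
    intro hmem
    have h1 := hgap _ hmem (by rw [hztx]; linarith)
    rw [hzty] at h1
    linarith
  obtain ⟨δ, hδ0, hball⟩ := Metric.isOpen_iff.1 hMc.isOpen_compl _ hztM
  obtain ⟨ε', hε'0, hlens0⟩ := mlur_lens hmlur hr0 hrd (half_pos hδ0)
  have hlens : ∀ z ∈ M, ‖z - x‖ ≤ r + ε' → ‖x - y‖ - r + ε' < ‖z - y‖ := by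
    intro z hzM hzx
    by_contra hcon
    push_neg at hcon
    have h2 := hlens0 z hzx hcon
    have hzball : z ∈ Metric.ball ((1 - r / ‖x - y‖) • x + (r / ‖x - y‖) • y) δ := by
      rw [Metric.mem_ball, dist_eq_norm]
      calc ‖z - ((1 - r / ‖x - y‖) • x + (r / ‖x - y‖) • y)‖ ≤ δ / 2 := h2
        _ < δ := half_lt_self hδ0
    exact hball hzball hzM
  -- constants for the witness function
  have hc0 : 0 < ‖x - y‖ + ε' := by linarith
  obtain ⟨θ, hθdef⟩ : ∃ θ : ℝ, θ = min (1/2) (ε' / (‖x - y‖ + ε')) := ⟨_, rfl⟩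
  have hθ0 : 0 < θ := hθdef ▸ lt_min (by norm_num) (div_pos hε'0 hc0)
  have hθ1 : θ < 1 := lt_of_le_of_lt (hθdef ▸ min_le_left _ _) (by norm_num)
  have hθc : θ * (‖x - y‖ + ε') ≤ ε' := by
    have h1 := hθdef ▸ min_le_right (1/2 : ℝ) (ε' / (‖x - y‖ + ε'))
    calc θ * (‖x - y‖ + ε') ≤ (ε' / (‖x - y‖ + ε')) * (‖x - y‖ + ε') :=
          mul_le_mul_of_nonneg_right h1 hc0.le
      _ = ε' := div_mul_cancel₀ _ hc0.ne'
  -- the witness function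
  obtain ⟨F, hF⟩ : ∃ F : ↥M → ℝ,
      ∀ z : ↥M, F z = θ * sInf (insert (‖x - y‖ + ε') (chainSums M y ε' (↑z : X))) :=
    ⟨_, fun _ => rfl⟩
  have hbdd : ∀ z : ↥M, BddBelow (insert (‖x - y‖ + ε') (chainSums M y ε' (↑z : X))) := by
    intro z
    refine ⟨0, fun b hb => ?_⟩
    rcases Set.mem_insert_iff.1 hb with rfl | hb
    · exact hc0.le
    · exact chainSums_nonneg hb
  have hne : ∀ z : ↥M, (insert (‖x - y‖ + ε') (chainSums M y ε' (↑z : X))).Nonempty :=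
    fun z => ⟨_, Set.mem_insert _ _⟩
  have hnn : ∀ z : ↥M, 0 ≤ sInf (insert (‖x - y‖ + ε') (chainSums M y ε' (↑z : X))) := by
    intro z
    refine le_csInf (hne z) fun b hb => ?_
    rcases Set.mem_insert_iff.1 hb with rfl | hb
    · exact hc0.le
    · exact chainSums_nonneg hb
  have hlec : ∀ z : ↥M,
      sInf (insert (‖x - y‖ + ε') (chainSums M y ε' (↑z : X))) ≤ ‖x - y‖ + ε' :=
    fun z => csInf_le (hbdd z) (Set.mem_insert _ _)
  have hstepT : ∀ u v : ↥M, ‖(↑u : X) - ↑v‖ ≤ ε' →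
      sInf (insert (‖x - y‖ + ε') (chainSums M y ε' (↑u : X)))
        ≤ sInf (insert (‖x - y‖ + ε') (chainSums M y ε' (↑v : X))) + ‖(↑u : X) - ↑v‖ := by
    intro u v huv
    have hkey : ∀ b ∈ insert (‖x - y‖ + ε') (chainSums M y ε' (↑v : X)),
        sInf (insert (‖x - y‖ + ε') (chainSums M y ε' (↑u : X))) - ‖(↑u : X) - ↑v‖ ≤ b := by
      intro b hb
      rcases Set.mem_insert_iff.1 hb with rfl | hb
      · have := hlec u
        have := norm_nonneg ((↑u : X) - ↑v)
        linarith
      · have hext := chainSums_extend u.2 huv hb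
        have h3 := csInf_le (hbdd u) (Set.mem_insert_of_mem _ hext)
        linarith
    have := le_csInf (hne v) hkey
    linarith
  have hFy : F ⟨y, hy⟩ = 0 := by
    rw [hF]
    have h0m : (0:ℝ) ∈ chainSums M y ε' ((⟨y, hy⟩ : ↥M) : X) := chainSums_zero_mem hy
    have h1 := csInf_le (hbdd ⟨y, hy⟩) (Set.mem_insert_of_mem _ h0m)
    have h2 := hnn ⟨y, hy⟩
    have : sInf (insert (‖x - y‖ + ε') (chainSums M y ε' ((⟨y, hy⟩ : ↥M) : X))) = 0 :=
      le_antisymm h1 h2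
    rw [this, mul_zero]
  have hFx : θ * (‖x - y‖ + ε') ≤ F ⟨x, hx⟩ := by
    rw [hF]
    refine mul_le_mul_of_nonneg_left ?_ hθ0.le
    refine le_csInf (hne _) fun b hb => ?_
    rcases Set.mem_insert_iff.1 hb with rfl | hb
    · exact le_rfl
    · exact chainSums_lower hr0 hrd le_rfl hlens b hb
  have hθle1 : θ ≤ 1 := hθ1.le
  have haux : ∀ a b : ↥M, F a - F b ≤ dist a b := by
    intro a b
    have hdab : dist a b = ‖(↑a : X) - ↑b‖ := by rw [Subtype.dist_eq, dist_eq_norm]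
    rw [hF, hF, hdab]
    by_cases hcase : ‖(↑a : X) - ↑b‖ ≤ ε'
    · have h' := hstepT a b hcase
      have h'' := mul_le_mul_of_nonneg_left h' hθ0.le
      rw [mul_add] at h''
      have h3 : θ * ‖(↑a : X) - ↑b‖ ≤ 1 * ‖(↑a : X) - ↑b‖ :=
        mul_le_mul_of_nonneg_right hθle1 (norm_nonneg _)
      rw [one_mul] at h3
      linarith
    · push_neg at hcase
      have h1 := mul_le_mul_of_nonneg_left (hlec a) hθ0.le
      have h2 := mul_nonneg hθ0.le (hnn b)
      linarith
  have hlip : LipschitzWith 1 F := by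
    refine LipschitzWith.of_dist_le_mul fun u v => ?_
    rw [NNReal.coe_one, one_mul, Real.dist_eq, abs_sub_le_iff]
    exact ⟨haux u v, by rw [dist_comm]; exact haux v u⟩
  have hdistxy : dist (⟨x, hx⟩ : ↥M) (⟨y, hy⟩ : ↥M) = ‖x - y‖ := by
    rw [Subtype.dist_eq, dist_eq_norm]
  obtain ⟨u, v, hd1, hd2, hd3⟩ := hΔ F hlip θ hθ0 hθ1
    (by rw [hdistxy, hFy, sub_zero]
        calc θ * ‖x - y‖ < θ * (‖x - y‖ + ε') := by nlinarith
          _ ≤ F ⟨x, hx⟩ := hFx) ε' hε'0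
  have huv : ‖(↑u : X) - ↑v‖ ≤ ε' := by
    have h' : dist u v ≤ ε' := hd2.le
    rwa [Subtype.dist_eq, dist_eq_norm] at h'
  have hstep' := hstepT u v huv
  have hcontra : F u - F v ≤ θ * dist u v := by
    rw [hF, hF, Subtype.dist_eq, dist_eq_norm]
    have h'' := mul_le_mul_of_nonneg_left hstep' hθ0.le
    rw [mul_add] at h''
    linarith
  exact absurd hd3 (not_lt.2 hcontra)

end AuxFinal

/-- For a complete subset `M` of an MLUR Banach space and `x ≠ y` in `M`:
`m_{x,y}` is a Δ-point iff all enlarged intermediate balls meet `M` iff `[x,y] ⊆ M`. -/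
theorem delta_point_iff_segment_mlur {X : Type*} [NormedAddCommGroup X]
    [NormedSpace ℝ X] [CompleteSpace X] (hmlur : MLUR X)
    (M : Set X) (hM : IsComplete M)
    (x y : X) (hx : x ∈ M) (hy : y ∈ M) (hxy : x ≠ y) :
    (LocalDeltaCondition (⟨x, hx⟩ : M) (⟨y, hy⟩ : M) ↔
      (∀ r : ℝ, 0 < r → r < ‖x - y‖ → ∀ ε : ℝ, 0 < ε →
        ∃ z ∈ M, ‖z - x‖ ≤ r + ε ∧ ‖z - y‖ ≤ ‖x - y‖ - r + ε)) ∧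
    ((∀ r : ℝ, 0 < r → r < ‖x - y‖ → ∀ ε : ℝ, 0 < ε →
        ∃ z ∈ M, ‖z - x‖ ≤ r + ε ∧ ‖z - y‖ ≤ ‖x - y‖ - r + ε) ↔
      (∀ t : ℝ, 0 ≤ t → t ≤ 1 → (1 - t) • x + t • y ∈ M)) := by
  have hd0 : 0 < ‖x - y‖ := by rw [norm_sub_pos_iff]; exact hxy
  have h32 : (∀ t : ℝ, 0 ≤ t → t ≤ 1 → (1 - t) • x + t • y ∈ M) →
      (∀ r : ℝ, 0 < r → r < ‖x - y‖ → ∀ ε : ℝ, 0 < ε →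
        ∃ z ∈ M, ‖z - x‖ ≤ r + ε ∧ ‖z - y‖ ≤ ‖x - y‖ - r + ε) := by
    intro h3 r hr0 hrd ε hε
    refine ⟨(1 - r / ‖x - y‖) • x + (r / ‖x - y‖) • y,
      h3 _ (by positivity) ((div_le_one hd0).2 hrd.le), ?_, ?_⟩
    · rw [seg_dist_x hd0 hr0.le]; linarith
    · rw [seg_dist_y hd0 hrd.le]; linarith
  constructor
  · constructor
    · intro h1 r hr0 hrd ε hε
      by_contra hno
      push_neg at hno
      exact gap_to_not_delta hmlur hM.isClosed hx hy hr0 hrd hε hno h1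
    · intro h2
      exact segment_to_delta hx hy hxy
        (fun t ht0 ht1 => cond2_to_segment hmlur hM hx hy hxy h2 ht0 ht1)
  · constructor
    · intro h2 t ht0 ht1
      exact cond2_to_segment hmlur hM hx hy hxy h2 ht0 ht1
    · exact h32
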